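/- (Interlacing for a negative rank-one update) Let D be a real diagonal n×n matrix whose diagonal entries listed in nondecreasing order are d_1 ≤ d_2 ≤ ... ≤ d_n. Let v ∈ ℝ^n with ‖v‖₂ = 1, let ρ < 0, and set C := D + ρ v vᵀ. If μ_1 ≤ μ_2 ≤ ... ≤ μ_n are the eigenvalues of C listed in nondecreasing order with multiplicity (i.e., the characteristic polynomial of C equals ∏_{i=1}^{n} (t − μ_i)), then μ_1 ≤ d_1 ≤ μ_2 ≤ d_2 ≤ ... ≤ μ_n ≤ d_n; that is, μ_i ≤ d_i for all i and d_i ≤ μ_{i+1} for all i < n. -/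

import Mathlib

open Matrix Polynomial

namespace Stmt15Aux

open Finset




noncomputable def qp {n : ℕ} (d : Fin n → ℝ) : Polynomial ℝ := ∏ i, (X - C (d i))

noncomputable def sp {n : ℕ} (d w : Fin n → ℝ) : Polynomial ℝ :=
  ∑ i, C (w i) * ∏ j ∈ univ.erase i, (X - C (d j))

lemma qp_monic {n : ℕ} (d : Fin n → ℝ) : (qp d).Monic :=
  monic_prod_of_monic _ _ (fun i _ => monic_X_sub_C (d i))

lemma qp_natDegree {n : ℕ} (d : Fin n → ℝ) : (qp d).natDegree = n := by
  rw [qp, natDegree_prod_of_monic _ _ (fun i _ => monic_X_sub_C (d i))]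
  simp

lemma qp_degree {n : ℕ} (d : Fin n → ℝ) : (qp d).degree = (n : WithBot ℕ) := by
  rw [degree_eq_natDegree (qp_monic d).ne_zero, qp_natDegree]

lemma sp_degree_lt {n : ℕ} (d w : Fin n → ℝ) : (sp d w).degree < (n : WithBot ℕ) := by
  refine lt_of_le_of_lt (degree_sum_le _ _) ?_
  rw [Finset.sup_lt_iff (by exact_mod_cast WithBot.bot_lt_coe n)]
  intro i _
  have hmon : (∏ j ∈ univ.erase i, (X - C (d j))).Monic :=
    monic_prod_of_monic _ _ (fun j _ => monic_X_sub_C (d j))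
  have hdeg : (∏ j ∈ univ.erase i, (X - C (d j))).natDegree = n - 1 := by
    rw [natDegree_prod_of_monic _ _ (fun j _ => monic_X_sub_C (d j))]
    simp [Finset.card_erase_of_mem (Finset.mem_univ i)]
  refine lt_of_le_of_lt (degree_mul_le _ _) ?_
  have h2 : degree (∏ j ∈ univ.erase i, (X - C (d j))) = ((n - 1 : ℕ) : WithBot ℕ) := by
    rw [degree_eq_natDegree hmon.ne_zero, hdeg]
  calc degree (C (w i)) + degree (∏ j ∈ univ.erase i, (X - C (d j)))
      ≤ 0 + ((n - 1 : ℕ) : WithBot ℕ) := add_le_add degree_C_le (le_of_eq h2)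
    _ = ((n - 1 : ℕ) : WithBot ℕ) := zero_add _
    _ < (n : WithBot ℕ) := by
        have hn : 0 < n := i.pos
        exact_mod_cast Nat.sub_lt hn one_pos

lemma pp_monic {n : ℕ} (d w : Fin n → ℝ) : (qp d + sp d w).Monic := by
  refine (qp_monic d).add_of_left ?_
  rw [qp_degree]; exact sp_degree_lt d w

lemma pp_natDegree {n : ℕ} (d w : Fin n → ℝ) : (qp d + sp d w).natDegree = n := by
  have : (qp d + sp d w).degree = (n : WithBot ℕ) := by
    rw [degree_add_eq_left_of_degree_lt, qp_degree]
    rw [qp_degree]; exact sp_degree_lt d w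
  exact natDegree_eq_of_degree_eq_some this



section Reindex
variable {n : ℕ} {M : Type*} [CommMonoid M]

lemma erase_self_image (i0 : Fin (n+1)) :
    (univ : Finset (Fin (n+1))).erase i0 = univ.image i0.succAbove := by
  ext x
  simp [Fin.exists_succAbove_eq_iff, eq_comm]

lemma prod_erase_self (f : Fin (n+1) → M) (i0 : Fin (n+1)) :
    ∏ k ∈ univ.erase i0, f k = ∏ k, f (i0.succAbove k) := by
  rw [erase_self_image, Finset.prod_image]
  intro a _ b _ h
  exact Fin.succAbove_right_injective h

lemma erase_succAbove (i0 : Fin (n+1)) (j : Fin n) :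
    (univ : Finset (Fin (n+1))).erase (i0.succAbove j)
      = insert i0 ((univ.erase j).image i0.succAbove) := by
  ext x
  simp only [mem_erase, mem_univ, and_true, mem_insert, mem_image]
  constructor
  · intro hx
    rcases eq_or_ne x i0 with rfl | hne
    · exact Or.inl rfl
    · obtain ⟨z, hz⟩ := Fin.exists_succAbove_eq hne
      exact Or.inr ⟨z, fun hzj => hx (by rw [← hz, hzj]), hz⟩
  · rintro (rfl | ⟨z, hz, rfl⟩)
    · exact (Fin.succAbove_ne _ j).symm
    · exact fun h => hz (Fin.succAbove_right_injective h)

lemma prod_erase_succAbove (f : Fin (n+1) → M) (i0 : Fin (n+1)) (j : Fin n) :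
    ∏ k ∈ univ.erase (i0.succAbove j), f k
      = f i0 * ∏ k ∈ univ.erase j, f (i0.succAbove k) := by
  rw [erase_succAbove, Finset.prod_insert, Finset.prod_image]
  · intro a _ b _ h; exact Fin.succAbove_right_injective h
  · simp only [mem_image, mem_erase]
    rintro ⟨z, _, hz⟩
    exact Fin.succAbove_ne i0 z hz

end Reindex


section Reindex
variable {n : ℕ} {M : Type*} [CommMonoid M]
end Reindex

lemma qp_deflate {n : ℕ} (d : Fin (n+1) → ℝ) (i0 : Fin (n+1)) :
    qp d = (X - C (d i0)) * qp (d ∘ i0.succAbove) := by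
  rw [qp, Fin.prod_univ_succAbove (fun i => X - C (d i)) i0, qp]
  rfl

lemma sp_deflate_zero {n : ℕ} (d w : Fin (n+1) → ℝ) (i0 : Fin (n+1)) (h : w i0 = 0) :
    sp d w = (X - C (d i0)) * sp (d ∘ i0.succAbove) (w ∘ i0.succAbove) := by
  rw [sp, Fin.sum_univ_succAbove (fun i => C (w i) * ∏ j ∈ univ.erase i, (X - C (d j))) i0,
    h]
  simp only [map_zero, zero_mul, zero_add]
  rw [sp, Finset.mul_sum]
  refine Finset.sum_congr rfl fun j _ => ?_
  rw [prod_erase_succAbove (fun k => X - C (d k)) i0 j]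
  simp only [Function.comp_apply]
  ring

lemma sp_deflate_tie {n : ℕ} (d w : Fin (n+1) → ℝ) (i : Fin n)
    (h : d i.castSucc = d i.succ) :
    sp d w = (X - C (d i.castSucc)) *
      sp (d ∘ (i.castSucc).succAbove)
        (fun j => w ((i.castSucc).succAbove j) + if j = i then w i.castSucc else 0) := by
  set i0 := i.castSucc with hi0
  set f : Fin (n+1) → Polynomial ℝ := fun k => X - C (d k) with hf
  have hfi : f (i0.succAbove i) = f i0 := by
    rw [hf]
    simp only [hi0, Fin.succAbove_castSucc_self]
    rw [← h]
  rw [sp, Fin.sum_univ_succAbove (fun k => C (w k) * ∏ j ∈ univ.erase k, f j) i0]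
  have hterm0 : C (w i0) * ∏ j ∈ univ.erase i0, f j
      = f i0 * (C (w i0) * ∏ k ∈ univ.erase i, f (i0.succAbove k)) := by
    rw [prod_erase_self f i0, ← Finset.mul_prod_erase univ (fun k => f (i0.succAbove k))
      (Finset.mem_univ i), hfi]
    ring
  have hterms : ∀ j : Fin n, C (w (i0.succAbove j)) * ∏ k ∈ univ.erase (i0.succAbove j), f k
      = f i0 * (C (w (i0.succAbove j)) * ∏ k ∈ univ.erase j, f (i0.succAbove k)) := by
    intro j
    rw [prod_erase_succAbove f i0 j]; ring
  rw [hterm0, Finset.sum_congr rfl (fun j _ => hterms j), ← Finset.mul_sum, ← mul_add]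
  congr 1
  rw [sp]
  have key : ∀ j : Fin n, C (w (i0.succAbove j) + if j = i then w i0 else 0) *
      ∏ k ∈ univ.erase j, (X - C ((d ∘ i0.succAbove) k))
      = C (w (i0.succAbove j)) * ∏ k ∈ univ.erase j, f (i0.succAbove k)
        + (if j = i then C (w i0) * ∏ k ∈ univ.erase j, f (i0.succAbove k) else 0) := by
    intro j
    rw [map_add, add_mul, apply_ite C, map_zero, ite_mul, zero_mul]
    simp only [Function.comp_apply]
    rfl
  rw [Finset.sum_congr rfl (fun j _ => key j), Finset.sum_add_distrib,
    Finset.sum_ite_eq' univ i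
      (fun j => C (w i0) * ∏ k ∈ univ.erase j, f (i0.succAbove k)),
    if_pos (Finset.mem_univ i)]
  ring


lemma eval_qp {n : ℕ} (d : Fin n → ℝ) (t : ℝ) : (qp d).eval t = ∏ i, (t - d i) := by
  simp [qp, eval_prod]

lemma eval_sp {n : ℕ} (d w : Fin n → ℝ) (t : ℝ) :
    (sp d w).eval t = ∑ i, w i * ∏ j ∈ univ.erase i, (t - d j) := by
  simp [sp, eval_finset_sum, eval_prod]

lemma erase_eq_Iio_union_Ioi {n : ℕ} (k : Fin n) :
    (univ : Finset (Fin n)).erase k = Iio k ∪ Ioi k := by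
  ext j
  simp only [mem_erase, mem_univ, and_true, mem_union, mem_Iio, mem_Ioi]
  exact ne_iff_lt_or_gt

lemma eval_pp_node {n : ℕ} (d w : Fin n → ℝ) (hd : StrictMono d) (k : Fin n) :
    (qp d + sp d w).eval (d k) = w k * ∏ j ∈ univ.erase k, (d k - d j) := by
  rw [eval_add, eval_qp, eval_sp]
  have h1 : ∏ i, (d k - d i) = 0 :=
    Finset.prod_eq_zero (Finset.mem_univ k) (sub_self _)
  have h2 : ∑ i, w i * ∏ j ∈ univ.erase i, (d k - d j)
      = w k * ∏ j ∈ univ.erase k, (d k - d j) := by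
    refine Finset.sum_eq_single k (fun i _ hik => ?_) (by simp)
    have : ∏ j ∈ univ.erase i, (d k - d j) = 0 :=
      Finset.prod_eq_zero (Finset.mem_erase.mpr ⟨(Ne.symm hik), Finset.mem_univ k⟩) (sub_self _)
    rw [this, mul_zero]
  rw [h1, h2, zero_add]

lemma node_sign {n : ℕ} (d w : Fin (n+1) → ℝ) (hd : StrictMono d) (hw : ∀ i, 0 < w i)
    (k : Fin (n+1)) :
    0 < (-1 : ℝ)^(n - (k : ℕ)) * (qp d + sp d w).eval (d k) := by
  rw [eval_pp_node d w hd k, erase_eq_Iio_union_Ioi,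
    Finset.prod_union (by simp [Finset.disjoint_left]; omega)]
  have hIio : 0 < ∏ j ∈ Iio k, (d k - d j) :=
    Finset.prod_pos fun j hj => sub_pos.mpr (hd (Finset.mem_Iio.mp hj))
  have hcardIoi : (Ioi k).card = n - (k : ℕ) := by
    rw [Fin.card_Ioi]; omega
  have hIoi : ∏ j ∈ Ioi k, (d k - d j)
      = (-1 : ℝ)^(n - (k : ℕ)) * ∏ j ∈ Ioi k, (d j - d k) := by
    calc ∏ j ∈ Ioi k, (d k - d j) = ∏ j ∈ Ioi k, (-1) * (d j - d k) := by
          refine Finset.prod_congr rfl fun j _ => ?_; ring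
      _ = (-1 : ℝ)^(Ioi k).card * ∏ j ∈ Ioi k, (d j - d k) := by
          rw [Finset.prod_mul_distrib, Finset.prod_const]
      _ = (-1 : ℝ)^(n - (k : ℕ)) * ∏ j ∈ Ioi k, (d j - d k) := by rw [hcardIoi]
  have hIoi2 : 0 < ∏ j ∈ Ioi k, (d j - d k) :=
    Finset.prod_pos fun j hj => sub_pos.mpr (hd (Finset.mem_Ioi.mp hj))
  rw [hIoi]
  have hsq : (-1 : ℝ)^(n - (k:ℕ)) * (-1 : ℝ)^(n - (k:ℕ)) = 1 := by
    rw [← pow_add]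
    exact Even.neg_one_pow ⟨n - (k:ℕ), rfl⟩
  have hexp : (-1:ℝ)^(n-(k:ℕ)) * (w k * ((∏ j ∈ Iio k, (d k - d j)) *
        ((-1:ℝ)^(n-(k:ℕ)) * ∏ j ∈ Ioi k, (d j - d k))))
      = w k * ((∏ j ∈ Iio k, (d k - d j)) * ∏ j ∈ Ioi k, (d j - d k)) :=
    calc (-1:ℝ)^(n-(k:ℕ)) * (w k * ((∏ j ∈ Iio k, (d k - d j)) *
          ((-1:ℝ)^(n-(k:ℕ)) * ∏ j ∈ Ioi k, (d j - d k))))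
        = ((-1:ℝ)^(n-(k:ℕ)) * (-1:ℝ)^(n-(k:ℕ))) *
            (w k * ((∏ j ∈ Iio k, (d k - d j)) * ∏ j ∈ Ioi k, (d j - d k))) := by ring
      _ = w k * ((∏ j ∈ Iio k, (d k - d j)) * ∏ j ∈ Ioi k, (d j - d k)) := by
          rw [hsq, one_mul]
  rw [hexp]
  exact mul_pos (hw k) (mul_pos hIio hIoi2)


lemma ite_le_ite_nat {P Q : Prop} [Decidable P] [Decidable Q] (h : P → Q) :
    (if P then 1 else 0 : ℕ) ≤ if Q then 1 else 0 := by
  split_ifs with h1 h2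
  · exact le_refl _
  · exact absurd (h h1) h2
  · exact Nat.zero_le _
  · exact le_refl _

lemma gap_root {n : ℕ} (d w : Fin (n+1) → ℝ) (hd : StrictMono d) (hw : ∀ i, 0 < w i)
    (k : Fin n) :
    ∃ x, (d k.castSucc < x ∧ x < d k.succ) ∧ (qp d + sp d w).eval x = 0 := by
  set p := qp d + sp d w with hp
  have hab : d k.castSucc < d k.succ := hd (Fin.castSucc_lt_succ : k.castSucc < k.succ)
  have hEa := node_sign d w hd hw k.castSucc
  have hEb := node_sign d w hd hw k.succ
  have hka : ((k.castSucc : Fin (n+1)) : ℕ) = (k : ℕ) := rfl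
  have hkb : ((k.succ : Fin (n+1)) : ℕ) = (k : ℕ) + 1 := rfl
  rw [hka] at hEa
  rw [hkb] at hEb
  have hkn : (k : ℕ) < n := k.isLt
  have hcont : ContinuousOn (fun x => p.eval x) (Set.Icc (d k.castSucc) (d k.succ)) :=
    (Polynomial.continuous p).continuousOn
  have hsub : n - ((k:ℕ)+1) = (n - (k:ℕ)) - 1 := by omega
  rcases Nat.even_or_odd (n - (k:ℕ)) with he | ho
  · -- Ea > 0, Eb < 0
    have ha : 0 < p.eval (d k.castSucc) := by
      rwa [he.neg_one_pow, one_mul] at hEa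
    have hb : p.eval (d k.succ) < 0 := by
      have hodd : Odd (n - ((k:ℕ)+1)) := by
        rw [hsub]
        exact Nat.Even.sub_odd (by omega) he odd_one
      rw [hodd.neg_one_pow] at hEb
      linarith
    have h0 : (0:ℝ) ∈ Set.Ioo (p.eval (d k.succ)) (p.eval (d k.castSucc)) := ⟨hb, ha⟩
    obtain ⟨x, hx, hfx⟩ := intermediate_value_Ioo' (le_of_lt hab) hcont h0
    exact ⟨x, ⟨hx.1, hx.2⟩, hfx⟩
  · have ha : p.eval (d k.castSucc) < 0 := by
      rw [ho.neg_one_pow] at hEa; linarith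
    have hb : 0 < p.eval (d k.succ) := by
      have heven : Even (n - ((k:ℕ)+1)) := by
        rw [hsub]
        exact Nat.Odd.sub_odd ho odd_one
      rwa [heven.neg_one_pow, one_mul] at hEb
    have h0 : (0:ℝ) ∈ Set.Ioo (p.eval (d k.castSucc)) (p.eval (d k.succ)) := ⟨ha, hb⟩
    obtain ⟨x, hx, hfx⟩ := intermediate_value_Ioo (le_of_lt hab) hcont h0
    exact ⟨x, ⟨hx.1, hx.2⟩, hfx⟩

lemma strict_case {n : ℕ} (d w : Fin (n+1) → ℝ) (hd : StrictMono d) (hw : ∀ i, 0 < w i)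
    (hcard : (qp d + sp d w).roots.card = n+1) (t : ℝ) :
    ((univ.filter fun i => d i ≤ t).card ≤ (qp d + sp d w).roots.countP (· ≤ t)) ∧
    ((qp d + sp d w).roots.countP (· < t) ≤ (univ.filter fun i => d i < t).card + 1) := by
  classical
  set p := qp d + sp d w with hp
  have hpne : p ≠ 0 := (pp_monic d w).ne_zero
  choose g hg1 hg2 using fun k => gap_root d w hd hw k
  have hglt1 : ∀ k, d k.castSucc < g k := fun k => (hg1 k).1
  have hglt2 : ∀ k, g k < d k.succ := fun k => (hg1 k).2
  have hgmono : StrictMono g := by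
    intro a b hab
    calc g a < d a.succ := hglt2 a
      _ ≤ d b.castSucc := hd.monotone (by
          rw [Fin.le_def, Fin.val_succ, Fin.coe_castSucc]; exact hab)
      _ < g b := hglt1 b
  set S : Multiset ℝ := univ.val.map g with hS
  have hSnodup : S.Nodup := Multiset.Nodup.map hgmono.injective univ.nodup
  have hSle : S ≤ p.roots := by
    rw [Multiset.le_iff_count]
    intro a
    by_cases ha : a ∈ S
    · rw [Multiset.count_eq_one_of_mem hSnodup ha]
      obtain ⟨k, _, hk⟩ := Multiset.mem_map.mp ha
      have : a ∈ p.roots := by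
        rw [mem_roots hpne]
        rw [← hk]; exact hg2 k
      exact Multiset.one_le_count_iff_mem.mpr this
    · rw [Multiset.count_eq_zero_of_notMem ha]
      exact Nat.zero_le _
  have hScard : Multiset.card S = n := by
    rw [hS, Multiset.card_map]
    exact Finset.card_univ.trans (Fintype.card_fin n) -- univ.val.card = univ.card?
  set T : Multiset ℝ := p.roots - S with hT
  have hST : T + S = p.roots := tsub_add_cancel_of_le hSle
  have hTcard : Multiset.card T = 1 := by
    have := congrArg Multiset.card hST
    rw [Multiset.card_add, hScard, hcard] at this
    omega
  obtain ⟨ν, hν⟩ := Multiset.card_eq_one.mp hTcard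
  have hroots : p.roots = ν ::ₘ S := by
    rw [← hST, hν, Multiset.singleton_add]
  -- ν < d 0
  have hνlt : ν < d 0 := by
    have hpeq : (p.roots.map fun a => X - C a).prod = p :=
      prod_multiset_X_sub_C_of_monic_of_roots_card_eq (pp_monic d w)
        (by rw [hcard, pp_natDegree])
    have heval0 : p.eval (d 0) = ((p.roots.map fun a => d 0 - a)).prod := by
      conv_lhs => rw [← hpeq]
      rw [eval_multiset_prod, Multiset.map_map]
      refine congrArg Multiset.prod (Multiset.map_congr rfl fun a _ => ?_)
      simp
    have hB : (0:ℝ) < ∏ k, (g k - d 0) :=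
      Finset.prod_pos fun k _ => sub_pos.mpr (lt_of_le_of_lt (hd.monotone (Fin.zero_le _))
        (hglt1 k))
    have hprodS : ((S.map fun a => d 0 - a)).prod = (-1:ℝ)^n * ∏ k, (g k - d 0) := by
      rw [hS, Multiset.map_map]
      have : ∏ k, (d 0 - g k) = (-1:ℝ)^n * ∏ k, (g k - d 0) := by
        calc ∏ k, (d 0 - g k) = ∏ k : Fin n, (-1) * (g k - d 0) := by
              refine Finset.prod_congr rfl fun k _ => ?_; ring
          _ = (-1:ℝ)^(univ : Finset (Fin n)).card * ∏ k, (g k - d 0) := by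
              rw [Finset.prod_mul_distrib, Finset.prod_const]
          _ = (-1:ℝ)^n * ∏ k, (g k - d 0) := by
              rw [Finset.card_univ, Fintype.card_fin]
      rw [← this]
      rfl
    have hsign0 := node_sign d w hd hw 0
    have h00 : ((0 : Fin (n+1)) : ℕ) = 0 := rfl
    rw [h00, Nat.sub_zero] at hsign0
    rw [heval0, hroots, Multiset.map_cons, Multiset.prod_cons, hprodS] at hsign0
    have hsq : (-1 : ℝ)^n * (-1 : ℝ)^n = 1 := by
      rw [← pow_add]; exact Even.neg_one_pow ⟨n, rfl⟩
    have hre : (-1:ℝ)^n * ((d 0 - ν) * ((-1:ℝ)^n * ∏ k, (g k - d 0)))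
        = (d 0 - ν) * ∏ k, (g k - d 0) := by
      calc (-1:ℝ)^n * ((d 0 - ν) * ((-1:ℝ)^n * ∏ k, (g k - d 0)))
          = ((-1:ℝ)^n * (-1:ℝ)^n) * ((d 0 - ν) * ∏ k, (g k - d 0)) := by ring
        _ = (d 0 - ν) * ∏ k, (g k - d 0) := by rw [hsq, one_mul]
    rw [hre] at hsign0
    rcases mul_pos_iff.mp hsign0 with ⟨h1, _⟩ | ⟨_, h2⟩
    · linarith
    · linarith
  -- counting
  have hcount : ∀ (pred : ℝ → Prop) [DecidablePred pred],
      p.roots.countP pred = (if pred ν then 1 else 0) + (univ.filter fun k => pred (g k)).card := by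
    intro pred _
    rw [hroots, Multiset.countP_cons, hS, Multiset.countP_map]
    rw [add_comm]
    rfl
  constructor
  · rw [hcount (· ≤ t), Finset.card_filter, Fin.sum_univ_succ, Finset.card_filter]
    refine Nat.add_le_add (ite_le_ite_nat fun h => le_of_lt (lt_of_lt_of_le hνlt h)) ?_
    refine Finset.sum_le_sum fun k _ => ite_le_ite_nat fun h => le_of_lt (lt_of_lt_of_le (hglt2 k) h)
  · rw [hcount (· < t)]
    have h1 : (if ν < t then 1 else 0 : ℕ) ≤ 1 := by split_ifs <;> omega
    have h2 : (univ.filter fun k => g k < t).card ≤ (univ.filter fun i => d i < t).card := by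
      rw [Finset.card_filter, Finset.card_filter, Fin.sum_univ_castSucc]
      refine le_trans (Finset.sum_le_sum fun k _ => ite_le_ite_nat fun h => lt_trans (hglt1 k) h) ?_
      exact Nat.le_add_right _ _
    omega


lemma deflate_step {n : ℕ} (d w : Fin (n+1) → ℝ) (i0 : Fin (n+1)) (w' : Fin n → ℝ)
    (hfac : qp d + sp d w
      = (X - C (d i0)) * (qp (d ∘ i0.succAbove) + sp (d ∘ i0.succAbove) w'))
    (hcard : (qp d + sp d w).roots.card = n+1)
    (ih : (qp (d ∘ i0.succAbove) + sp (d ∘ i0.succAbove) w').roots.card = n →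
      ∀ t : ℝ, ((univ.filter fun j => (d ∘ i0.succAbove) j ≤ t).card
          ≤ (qp (d ∘ i0.succAbove) + sp (d ∘ i0.succAbove) w').roots.countP (· ≤ t)) ∧
        ((qp (d ∘ i0.succAbove) + sp (d ∘ i0.succAbove) w').roots.countP (· < t)
          ≤ (univ.filter fun j => (d ∘ i0.succAbove) j < t).card + 1))
    (t : ℝ) :
    ((univ.filter fun i => d i ≤ t).card ≤ (qp d + sp d w).roots.countP (· ≤ t)) ∧
    ((qp d + sp d w).roots.countP (· < t) ≤ (univ.filter fun i => d i < t).card + 1) := by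
  classical
  set d' := d ∘ i0.succAbove with hd'
  set p' := qp d' + sp d' w' with hp'
  have hp'ne : p' ≠ 0 := (pp_monic d' w').ne_zero
  have hroots : (qp d + sp d w).roots = d i0 ::ₘ p'.roots := by
    rw [hfac, roots_mul (mul_ne_zero (X_sub_C_ne_zero (d i0)) hp'ne), roots_X_sub_C,
      Multiset.singleton_add]
  have hcard' : p'.roots.card = n := by
    rw [hroots, Multiset.card_cons] at hcard
    omega
  obtain ⟨ihs, ihl⟩ := ih hcard' t
  have hfilter_le : (univ.filter fun i => d i ≤ t).card
      = (if d i0 ≤ t then 1 else 0) + (univ.filter fun j => d' j ≤ t).card := by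
    rw [Finset.card_filter, Finset.card_filter,
      Fin.sum_univ_succAbove (fun i => if d i ≤ t then 1 else 0) i0]
    rfl
  have hfilter_lt : (univ.filter fun i => d i < t).card
      = (if d i0 < t then 1 else 0) + (univ.filter fun j => d' j < t).card := by
    rw [Finset.card_filter, Finset.card_filter,
      Fin.sum_univ_succAbove (fun i => if d i < t then 1 else 0) i0]
    rfl
  constructor
  · rw [hfilter_le, hroots, Multiset.countP_cons, add_comm (Multiset.countP _ _)]
    exact Nat.add_le_add (le_refl _) ihs
  · rw [hfilter_lt, hroots, Multiset.countP_cons, add_comm (Multiset.countP _ _)]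
    omega

lemma core (n : ℕ) (d w : Fin n → ℝ) (hd : Monotone d) (hw : ∀ i, 0 ≤ w i)
    (hcard : (qp d + sp d w).roots.card = n) (t : ℝ) :
    ((univ.filter fun i => d i ≤ t).card ≤ (qp d + sp d w).roots.countP (· ≤ t)) ∧
    ((qp d + sp d w).roots.countP (· < t) ≤ (univ.filter fun i => d i < t).card + 1) := by
  classical
  induction n generalizing t with
  | zero =>
      have : (qp d + sp d w).roots = 0 := Multiset.card_eq_zero.mp hcard
      simp [this]
  | succ n ih =>
      by_cases hA : ∃ i0, w i0 = 0
      · obtain ⟨i0, hi0⟩ := hA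
        have hfac : qp d + sp d w
            = (X - C (d i0)) * (qp (d ∘ i0.succAbove) + sp (d ∘ i0.succAbove) (w ∘ i0.succAbove)) := by
          rw [qp_deflate d i0, sp_deflate_zero d w i0 hi0, mul_add]
        exact deflate_step d w i0 (w ∘ i0.succAbove) hfac hcard
          (fun hc t => ih _ _ (hd.comp (Fin.strictMono_succAbove i0).monotone)
            (fun j => hw _) hc t) t
      · by_cases hB : ∃ i : Fin n, d i.castSucc = d i.succ
        · obtain ⟨i, hi⟩ := hB
          set i0 := i.castSucc with hi0def
          set w' : Fin n → ℝ := fun j => w (i0.succAbove j) + if j = i then w i0 else 0 with hw'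
          have hfac : qp d + sp d w
              = (X - C (d i0)) * (qp (d ∘ i0.succAbove) + sp (d ∘ i0.succAbove) w') := by
            rw [qp_deflate d i0, sp_deflate_tie d w i hi, mul_add]
          exact deflate_step d w i0 w' hfac hcard
            (fun hc t => ih _ _ (hd.comp (Fin.strictMono_succAbove i0).monotone)
              (fun j => add_nonneg (hw _) (by split_ifs; exacts [hw _, le_refl _])) hc t) t
        · push_neg at hA hB
          have hdmono : StrictMono d := by
            rw [Fin.strictMono_iff_lt_succ]
            intro i
            exact lt_of_le_of_ne (hd (le_of_lt (Fin.castSucc_lt_succ : i.castSucc < i.succ))) (hB i)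
          have hwpos : ∀ i, 0 < w i := fun i => lt_of_le_of_ne (hw i) (Ne.symm (hA i))
          exact strict_case d w hdmono hwpos hcard t


lemma charpoly_eq {n : ℕ} (d v : Fin n → ℝ) (ρ : ℝ) :
    (Matrix.diagonal d + ρ • vecMulVec v v).charpoly
      = qp d + sp d (fun i => -ρ * (v i)^2) := by
  classical
  set M := Matrix.diagonal d + ρ • vecMulVec v v with hM
  apply Polynomial.eq_of_infinite_eval_eq
  have hsub : (Set.range d)ᶜ ⊆ {x | eval x M.charpoly = eval x (qp d + sp d (fun i => -ρ * (v i)^2))} := by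
    intro x hx
    have hxd : ∀ i, x ≠ d i := by
      intro i h
      exact hx ⟨i, h.symm⟩
    -- eval of charpoly as a determinant
    have h1 : eval x M.charpoly = ((charmatrix M).map (evalRingHom x)).det := by
      rw [Matrix.charpoly]
      exact RingHom.map_det (evalRingHom x) (charmatrix M)
    have h2 : (charmatrix M).map (evalRingHom x)
        = Matrix.diagonal (fun i => x - d i)
          + Matrix.replicateCol Unit (fun i => (-ρ * v i)) * Matrix.replicateRow Unit v := by
      ext i j
      by_cases hij : i = j
      · subst hij
        simp [charmatrix_apply_eq, hM, Matrix.add_apply, Matrix.diagonal_apply_eq,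
          Matrix.smul_apply, vecMulVec_apply, Matrix.mul_apply, Matrix.replicateCol_apply,
          Matrix.replicateRow_apply]
        ring
      · simp [charmatrix_apply_ne _ _ _ hij, hM, Matrix.add_apply,
          Matrix.diagonal_apply_ne _ hij, Matrix.smul_apply, vecMulVec_apply,
          Matrix.mul_apply, Matrix.replicateCol_apply, Matrix.replicateRow_apply]
        ring
    have hA : IsUnit (Matrix.diagonal (fun i => x - d i)).det := by
      rw [Matrix.det_diagonal]
      exact (Finset.prod_ne_zero_iff.mpr fun i _ => sub_ne_zero.mpr (hxd i)).isUnit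
    simp only [Set.mem_setOf_eq]
    rw [h1, h2, Matrix.det_add_replicateCol_mul_replicateRow hA]
    have hinv : (Matrix.diagonal (fun i => x - d i))⁻¹
        = Matrix.diagonal (fun i => (x - d i)⁻¹) := by
      apply Matrix.inv_eq_right_inv
      rw [Matrix.diagonal_mul_diagonal]
      ext i j
      rcases eq_or_ne i j with rfl|hij
      · simp [mul_inv_cancel₀ (sub_ne_zero.mpr (hxd i))]
      · simp [Matrix.diagonal_apply_ne _ hij, Matrix.one_apply_ne hij]
    rw [hinv, Matrix.det_diagonal, Matrix.det_unique]
    have hentry : ((1 + Matrix.replicateRow Unit v * Matrix.diagonal (fun i => (x - d i)⁻¹)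
          * Matrix.replicateCol Unit (fun i => (-ρ * v i)) : Matrix Unit Unit ℝ)) default default
        = 1 + ∑ i, v i * (x - d i)⁻¹ * (-ρ * v i) := by
      simp [Matrix.add_apply, Matrix.one_apply, Matrix.mul_apply, Matrix.replicateRow_apply,
        Matrix.replicateCol_apply, Matrix.diagonal_apply, Finset.mul_sum, Finset.sum_mul]
    rw [hentry]
    rw [eval_add, eval_qp, eval_sp]
    rw [mul_add, mul_one, Finset.mul_sum]
    congr 1
    refine Finset.sum_congr rfl fun i _ => ?_
    have hprod : (∏ j, (x - d j)) = (x - d i) * ∏ j ∈ univ.erase i, (x - d j) :=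
      (Finset.mul_prod_erase univ _ (Finset.mem_univ i)).symm
    rw [hprod]
    have hne : x - d i ≠ 0 := sub_ne_zero.mpr (hxd i)
    field_simp
  exact ((Set.finite_range d).infinite_compl).mono hsub



end Stmt15Aux

open Stmt15Aux Finset in
/-- Interlacing for a negative rank-one update: Let `D = diagonal d` with
`d` nondecreasing, `‖v‖₂ = 1`, `ρ < 0`, and `C := D + ρ v vᵀ`. If `μ_1 ≤ ... ≤ μ_n` are
the eigenvalues of `C` listed in nondecreasing order with multiplicity (i.e. the
characteristic polynomial of `C` is `∏ (t − μ_i)`), then `μ_i ≤ d_i` for all `i` and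
`d_i ≤ μ_{i+1}` for all `i < n`. -/
theorem stmt15 {n : ℕ} (d : Fin n → ℝ) (hd : Monotone d)
    (D : Matrix (Fin n) (Fin n) ℝ) (hD : D = Matrix.diagonal d)
    (v : Fin n → ℝ) (hv : Real.sqrt (v ⬝ᵥ v) = 1)
    (ρ : ℝ) (hρ : ρ < 0)
    (C : Matrix (Fin n) (Fin n) ℝ) (hC : C = D + ρ • vecMulVec v v)
    (μ : Fin n → ℝ) (hμmono : Monotone μ)
    (hμ : C.charpoly = ∏ i : Fin n, (Polynomial.X - Polynomial.C (μ i))) :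
    (∀ i : Fin n, μ i ≤ d i) ∧
      (∀ i : Fin n, ∀ h : (i : ℕ) + 1 < n, d i ≤ μ ⟨(i : ℕ) + 1, h⟩) := by
  classical
  set w : Fin n → ℝ := fun i => -ρ * (v i)^2 with hw
  have hweq : qp d + sp d w = ∏ i : Fin n, (Polynomial.X - Polynomial.C (μ i)) := by
    rw [← hμ, hC, hD, charpoly_eq]
  have hroots : (qp d + sp d w).roots = univ.val.map μ := by
    rw [hweq]
    have : (∏ i : Fin n, (Polynomial.X - Polynomial.C (μ i)))
        = ((univ.val.map μ).map fun a => Polynomial.X - Polynomial.C a).prod := by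
      rw [Multiset.map_map]
      rfl
    rw [this, Polynomial.roots_multiset_prod_X_sub_C]
  have hcard : (qp d + sp d w).roots.card = n := by
    rw [hroots, Multiset.card_map]
    exact Finset.card_univ.trans (Fintype.card_fin n)
  have hwnn : ∀ i, 0 ≤ w i := fun i => mul_nonneg (by linarith) (sq_nonneg _)
  have hkey := core n d w hd hwnn hcard
  have hcount : ∀ (pred : ℝ → Prop) [DecidablePred pred],
      (qp d + sp d w).roots.countP pred = (univ.filter fun k => pred (μ k)).card := by
    intro pred _
    rw [hroots, Multiset.countP_map]
    rfl
  constructor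
  · intro i
    obtain ⟨h1, -⟩ := hkey (d i)
    rw [hcount (· ≤ d i)] at h1
    by_contra hlt
    push_neg at hlt
    have hsub1 : Iic i ⊆ univ.filter fun k => d k ≤ d i := by
      intro k hk
      simp only [mem_filter, mem_univ, true_and]
      exact hd (mem_Iic.mp hk)
    have hsub2 : (univ.filter fun k => μ k ≤ d i) ⊆ Iio i := by
      intro k hk
      simp only [mem_filter, mem_univ, true_and] at hk
      rw [mem_Iio]
      by_contra hik
      push_neg at hik
      exact absurd (le_trans (hμmono hik) hk) (not_le.mpr hlt)
    have c1 : (i : ℕ) + 1 ≤ (univ.filter fun k => d k ≤ d i).card := by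
      calc (i:ℕ) + 1 = (Iic i).card := (Fin.card_Iic i).symm
        _ ≤ _ := Finset.card_le_card hsub1
    have c2 : (univ.filter fun k => μ k ≤ d i).card ≤ (i : ℕ) := by
      calc _ ≤ (Iio i).card := Finset.card_le_card hsub2
        _ = (i : ℕ) := Fin.card_Iio i
    omega
  · intro i h
    obtain ⟨-, h2⟩ := hkey (d i)
    rw [hcount (· < d i)] at h2
    by_contra hlt
    push_neg at hlt
    set j : Fin n := ⟨(i : ℕ) + 1, h⟩ with hj
    have hsub1 : Iic j ⊆ univ.filter fun k => μ k < d i := by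
      intro k hk
      simp only [mem_filter, mem_univ, true_and]
      exact lt_of_le_of_lt (hμmono (mem_Iic.mp hk)) hlt
    have hsub2 : (univ.filter fun k => d k < d i) ⊆ Iio i := by
      intro k hk
      simp only [mem_filter, mem_univ, true_and] at hk
      rw [mem_Iio]
      by_contra hik
      push_neg at hik
      exact absurd (hd hik) (not_le.mpr hk)
    have c1 : (i : ℕ) + 2 ≤ (univ.filter fun k => μ k < d i).card := by
      calc (i:ℕ) + 2 = (Iic j).card := by rw [Fin.card_Iic]
        _ ≤ _ := Finset.card_le_card hsub1
    have c2 : (univ.filter fun k => d k < d i).card ≤ (i : ℕ) := by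
      calc _ ≤ (Iio i).card := Finset.card_le_card hsub2
        _ = (i : ℕ) := Fin.card_Iio i
    omega
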